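/- The SAFFRON wealth sum is coordinatewise non-decreasing in the history: for fixed t, target level α ∈ (0,1), initial wealth 0 < W_0 ≤ α, and positive non-increasing sequence {γ_j}, if two binary histories satisfy (R_{1:t-1}, C_{1:t-1}) ≥ (R̃_{1:t-1}, C̃_{1:t-1}) coordinatewise, then s_t(R_{1:t-1}, C_{1:t-1}) ≥ s_t(R̃_{1:t-1}, C̃_{1:t-1}). -/

import Mathlib

/-- The SAFFRON wealth sum `s_t(R_{1:t-1}, C_{1:t-1})`.  With `τ_j` the index of the `j`-th
rejection (`τ_0 = 0`) and `C_{j+} = Σ_{i=τ_j+1}^{t-1} C_i`, this is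
`W₀·γ_{t−C_{0+}} + (α−W₀)·γ_{t−τ_1−C_{1+}} + Σ_{j≥2} α·γ_{t−τ_j−C_{j+}}`,
written as a sum over the rejection times `i ∈ {1, ..., t-1}` with `R_i = 1`:
a rejection at time `i` contributes `(α−W₀)` (if it is the first rejection) or `α`
(otherwise) times `γ_{t − i − #{candidates in (i, t-1]}}`. -/
noncomputable def saffronSum (q W0 : ℝ) (γ : ℕ → ℝ) (t : ℕ) (R C : ℕ → Bool) : ℝ :=
  W0 * γ (t - ((Finset.Icc 1 (t - 1)).filter fun i => C i = true).card) +
    ∑ i ∈ (Finset.Icc 1 (t - 1)).filter (fun i => R i = true),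
      (if ((Finset.Icc 1 i).filter fun k => R k = true).card = 1 then q - W0 else q) *
        γ (t - i - ((Finset.Icc (i + 1) (t - 1)).filter fun k => C k = true).card)

/-- The SAFFRON wealth sum is coordinatewise non-decreasing in the history: if two binary
histories satisfy `(R_{1:t-1}, C_{1:t-1}) ≥ (R̃_{1:t-1}, C̃_{1:t-1})` coordinatewise, then
`s_t(R_{1:t-1}, C_{1:t-1}) ≥ s_t(R̃_{1:t-1}, C̃_{1:t-1})`. -/
theorem saffronSum_monotone (q W0 : ℝ) (hq : q ∈ Set.Ioo (0 : ℝ) 1)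
    (hW0pos : 0 < W0) (hW0le : W0 ≤ q)
    (γ : ℕ → ℝ) (hγpos : ∀ j, 1 ≤ j → 0 < γ j)
    (hγanti : ∀ j k, 1 ≤ j → j ≤ k → γ k ≤ γ j)
    (t : ℕ) (R C R' C' : ℕ → Bool)
    (hR : ∀ i, R' i = true → R i = true) (hC : ∀ i, C' i = true → C i = true) :
    saffronSum q W0 γ t R' C' ≤ saffronSum q W0 γ t R C := by
  obtain ⟨hq0, _⟩ := hq
  have hW0' : (0 : ℝ) ≤ q - W0 := by linarith
  -- index lower bound for the γ arguments inside the sum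
  have hidx : ∀ i ∈ Finset.Icc 1 (t - 1), ∀ D : ℕ → Bool,
      1 ≤ t - i - ((Finset.Icc (i + 1) (t - 1)).filter fun k => D k = true).card := by
    intro i hi D
    simp only [Finset.mem_Icc] at hi
    have h := Finset.card_filter_le (Finset.Icc (i + 1) (t - 1)) (fun k => D k = true)
    rw [Nat.card_Icc] at h
    omega
  have hcmono : ∀ a b : ℕ, ((Finset.Icc a b).filter fun k => C' k = true).card
      ≤ ((Finset.Icc a b).filter fun k => C k = true).card := fun a b =>
    Finset.card_le_card (Finset.monotone_filter_right _ (fun x _ hx => hC x hx))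
  have hrmono : ∀ a b : ℕ, ((Finset.Icc a b).filter fun k => R' k = true).card
      ≤ ((Finset.Icc a b).filter fun k => R k = true).card := fun a b =>
    Finset.card_le_card (Finset.monotone_filter_right _ (fun x _ hx => hR x hx))
  have step1 : saffronSum q W0 γ t R' C' ≤ saffronSum q W0 γ t R' C := by
    unfold saffronSum
    apply add_le_add
    · rcases Nat.eq_zero_or_pos t with ht | ht
      · subst ht; simp
      · apply mul_le_mul_of_nonneg_left _ hW0pos.le
        apply hγanti
        · have h := Finset.card_filter_le (Finset.Icc 1 (t - 1)) (fun k => C k = true)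
          rw [Nat.card_Icc] at h
          omega
        · have := hcmono 1 (t - 1)
          omega
    · apply Finset.sum_le_sum
      intro i hi
      have hi' := (Finset.mem_filter.mp hi).1
      apply mul_le_mul_of_nonneg_left
      · apply hγanti _ _ (hidx i hi' C)
        have := hcmono (i + 1) (t - 1)
        omega
      · split_ifs
        · exact hW0'
        · exact hq0.le
  have step2 : saffronSum q W0 γ t R' C ≤ saffronSum q W0 γ t R C := by
    unfold saffronSum
    apply add_le_add le_rfl
    have hsub : (Finset.Icc 1 (t - 1)).filter (fun i => R' i = true)
        ⊆ (Finset.Icc 1 (t - 1)).filter (fun i => R i = true) :=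
      Finset.monotone_filter_right _ (fun x _ hx => hR x hx)
    calc ∑ i ∈ (Finset.Icc 1 (t - 1)).filter (fun i => R' i = true),
          (if ((Finset.Icc 1 i).filter fun k => R' k = true).card = 1 then q - W0 else q) *
            γ (t - i - ((Finset.Icc (i + 1) (t - 1)).filter fun k => C k = true).card)
        ≤ ∑ i ∈ (Finset.Icc 1 (t - 1)).filter (fun i => R' i = true),
          (if ((Finset.Icc 1 i).filter fun k => R k = true).card = 1 then q - W0 else q) *
            γ (t - i - ((Finset.Icc (i + 1) (t - 1)).filter fun k => C k = true).card) := by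
          apply Finset.sum_le_sum
          intro i hi
          obtain ⟨hi', hRi'⟩ := Finset.mem_filter.mp hi
          have hgpos := hγpos _ (hidx i hi' C)
          apply mul_le_mul_of_nonneg_right _ hgpos.le
          have hge1 : 1 ≤ ((Finset.Icc 1 i).filter fun k => R' k = true).card := by
            apply Finset.card_pos.mpr
            refine ⟨i, Finset.mem_filter.mpr ⟨Finset.mem_Icc.mpr ⟨?_, le_rfl⟩, hRi'⟩⟩
            exact (Finset.mem_Icc.mp hi').1
          have hle := hrmono 1 i
          split_ifs with h1 h2
          · exact le_rfl
          · linarith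
          · omega
          · exact le_rfl
      _ ≤ ∑ i ∈ (Finset.Icc 1 (t - 1)).filter (fun i => R i = true),
          (if ((Finset.Icc 1 i).filter fun k => R k = true).card = 1 then q - W0 else q) *
            γ (t - i - ((Finset.Icc (i + 1) (t - 1)).filter fun k => C k = true).card) := by
          apply Finset.sum_le_sum_of_subset_of_nonneg hsub
          intro i hi _
          have hi' := (Finset.mem_filter.mp hi).1
          have hgpos := hγpos _ (hidx i hi' C)
          apply mul_nonneg _ hgpos.le
          split_ifs
          · exact hW0'
          · exact hq0.le
  exact step1.trans step2
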